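/- arXiv:2501.02639 — 3 statements merged into one kernel-verified Lean document; each statement's English description precedes it below -/
import Mathlib

section
/- For ideals in C[t, z_{ij}]: if i ≤ j then J_i^t ⊆ J_j^t and K_j ⊆ K_i; and for i < j and k < ℓ, the inclusion J_i^t + K_j ⊆ J_k^t + K_ℓ holds if and only if i ≤ k and j ≥ ℓ. -/
open MvPolynomial

/-- The variable `t` in `ℂ[t, z_{ij} : 1 ≤ i, j ≤ n]`. -/
noncomputable def tt (n : ℕ) : MvPolynomial (Option (Fin n × Fin n)) ℂ := X none

/-- The variable `z_{ij}` in `ℂ[t, z_{ij} : 1 ≤ i, j ≤ n]` (`0`-based indexing). -/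
noncomputable def zz (n : ℕ) (i j : Fin n) : MvPolynomial (Option (Fin n × Fin n)) ℂ :=
  X (some (i, j))

/-- The first row index (row `1` in `1`-based indexing). -/
def row1 (n : ℕ) [NeZero n] : Fin n := ⟨0, Nat.pos_of_ne_zero (NeZero.ne n)⟩

/-- The last row index (row `n` in `1`-based indexing). -/
def rowN (n : ℕ) [NeZero n] : Fin n :=
  ⟨n - 1, Nat.sub_lt (Nat.pos_of_ne_zero (NeZero.ne n)) one_pos⟩

/-- The ideal `J_i^t = ⟨t z_{11} + z_{n1}, …, t z_{1i} + z_{ni}⟩` (so `J_0^t = 0`). -/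
noncomputable def Jt (n : ℕ) [NeZero n] (i : ℕ) :
    Ideal (MvPolynomial (Option (Fin n × Fin n)) ℂ) :=
  Ideal.span {f | ∃ k : Fin n, (k : ℕ) < i ∧ f = tt n * zz n (row1 n) k + zz n (rowN n) k}

/-- The ideal `K_j`, generated by the `j × j` minors `p_B` of `(z_{kℓ})` with row set
`B ⊆ {2, …, n}`, `|B| = j`, and columns `1, …, j`.  (For `j ≤ n` the column index
`b % n` is just `b`; for `j = n` no admissible `B` exists, so `K_n = 0`, and
`K_0 = ⟨det of the empty matrix⟩ = ⊤`, matching the conventions.) -/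
noncomputable def Kt (n : ℕ) [NeZero n] (j : ℕ) :
    Ideal (MvPolynomial (Option (Fin n × Fin n)) ℂ) :=
  Ideal.span {f | ∃ B : Fin j → Fin n, StrictMono B ∧ (∀ a, 1 ≤ (B a : ℕ)) ∧
    f = Matrix.det (Matrix.of fun a b : Fin j =>
      zz n (B a) ⟨(b : ℕ) % n, Nat.mod_lt _ (Nat.pos_of_ne_zero (NeZero.ne n))⟩)}

lemma Jt_mono (n : ℕ) [NeZero n] : Monotone (Jt n) := by
  intro i j h
  apply Ideal.span_mono
  rintro f ⟨m, hm, rfl⟩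
  exact ⟨m, lt_of_lt_of_le hm h, rfl⟩

lemma Kt_succ_le (n : ℕ) [NeZero n] (m : ℕ) : Kt n (m + 1) ≤ Kt n m := by
  rw [Kt, Ideal.span_le]
  rintro f ⟨B, hB, hB1, rfl⟩
  simp only [SetLike.mem_coe]
  rw [Matrix.det_succ_column _ (Fin.last m)]
  refine Ideal.sum_mem _ fun a _ => Ideal.mul_mem_left _ _ (Ideal.subset_span ?_)
  refine ⟨B ∘ Fin.succAbove a, hB.comp (Fin.strictMono_succAbove a), fun x => hB1 _, ?_⟩
  congr 1
  ext x y
  simp [Fin.ext_iff]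

lemma Kt_antitone (n : ℕ) [NeZero n] : Antitone (Kt n) :=
  antitone_nat_of_succ_le (Kt_succ_le n)

lemma notmem_case1 (n : ℕ) [NeZero n] {k l : ℕ} (hk : 1 ≤ k) (hkl : k < l) (hl : l ≤ n - 1)
    (hkn : k < n) :
    tt n * zz n (row1 n) ⟨k, hkn⟩ + zz n (rowN n) ⟨k, hkn⟩ ∉ Jt n k + Kt n l := by
  have hn0 : 0 < n := Nat.pos_of_ne_zero (NeZero.ne n)
  set v : Option (Fin n × Fin n) → ℂ :=
    fun o => if o = some (rowN n, (⟨k, hkn⟩ : Fin n)) then 1 else 0 with hv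
  intro hmem
  have hker : Jt n k + Kt n l ≤
      RingHom.ker (aeval v : MvPolynomial (Option (Fin n × Fin n)) ℂ →ₐ[ℂ] ℂ) := by
    rw [Ideal.add_eq_sup]
    apply sup_le
    · rw [Jt, Ideal.span_le]
      rintro f ⟨m, hm, rfl⟩
      have hm' : m ≠ (⟨k, hkn⟩ : Fin n) := by
        simp only [Fin.ne_iff_vne]
        omega
      simp [RingHom.mem_ker, tt, zz, hv, hm']
    · rw [Kt, Ideal.span_le]
      rintro f ⟨B, hB, hB1, rfl⟩
      simp only [SetLike.mem_coe, RingHom.mem_ker]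
      rw [AlgHom.map_det]
      apply Matrix.det_eq_zero_of_column_eq_zero ⟨0, by omega⟩
      intro a
      simp only [AlgHom.mapMatrix_apply, Matrix.map_apply, Matrix.of_apply, zz, aeval_X, hv]
      rw [if_neg]
      simp only [Option.some.injEq, Prod.mk.injEq, Fin.ext_iff, not_and]
      intro _
      simp only [Nat.zero_mod]
      omega
  have h0 := hker (hmem)
  rw [RingHom.mem_ker] at h0
  simp [tt, zz, hv] at h0

lemma notmem_case2 (n : ℕ) [NeZero n] {j k l : ℕ} (hk : 1 ≤ k) (hkl : k < l) (hl : l ≤ n - 1)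
    (hjl : j < l) (hjn : j ≤ n - 1) :
    Matrix.det (Matrix.of fun a b : Fin j =>
      zz n ⟨(a : ℕ) + 1, by have := a.isLt; omega⟩
        ⟨(b : ℕ) % n, Nat.mod_lt _ (Nat.pos_of_ne_zero (NeZero.ne n))⟩)
      ∉ Jt n k + Kt n l := by
  have hn0 : 0 < n := Nat.pos_of_ne_zero (NeZero.ne n)
  set v : Option (Fin n × Fin n) → ℂ :=
    fun o => o.elim 0 fun p => if (p.1 : ℕ) = (p.2 : ℕ) + 1 ∧ (p.2 : ℕ) < j then 1 else 0 with hv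
  intro hmem
  have hker : Jt n k + Kt n l ≤
      RingHom.ker (aeval v : MvPolynomial (Option (Fin n × Fin n)) ℂ →ₐ[ℂ] ℂ) := by
    rw [Ideal.add_eq_sup]
    apply sup_le
    · rw [Jt, Ideal.span_le]
      rintro f ⟨m, hm, rfl⟩
      simp only [SetLike.mem_coe, RingHom.mem_ker, map_add, map_mul, tt, zz, aeval_X, hv,
        Option.elim, rowN]
      rw [zero_mul, zero_add, if_neg]
      rintro ⟨h1, h2⟩
      omega
    · rw [Kt, Ideal.span_le]
      rintro f ⟨B, hB, hB1, rfl⟩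
      simp only [SetLike.mem_coe, RingHom.mem_ker]
      rw [AlgHom.map_det]
      apply Matrix.det_eq_zero_of_column_eq_zero ⟨j, hjl⟩
      intro a
      simp only [AlgHom.mapMatrix_apply, Matrix.map_apply, Matrix.of_apply, zz, aeval_X, hv,
        Option.elim]
      rw [if_neg]
      rintro ⟨_, h2⟩
      rw [Nat.mod_eq_of_lt (by omega)] at h2
      omega
  have h0 := hker (hmem)
  rw [RingHom.mem_ker] at h0
  rw [AlgHom.map_det] at h0
  have h1 : ((aeval v : MvPolynomial (Option (Fin n × Fin n)) ℂ →ₐ[ℂ] ℂ).mapMatrix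
      (Matrix.of fun a b : Fin j =>
        zz n ⟨(a : ℕ) + 1, by have := a.isLt; omega⟩
          ⟨(b : ℕ) % n, Nat.mod_lt _ (Nat.pos_of_ne_zero (NeZero.ne n))⟩)) = 1 := by
    ext a b
    simp only [AlgHom.mapMatrix_apply, Matrix.map_apply, Matrix.of_apply, zz, aeval_X, hv,
      Option.elim, Matrix.one_apply]
    have hb : (b : ℕ) % n = (b : ℕ) := Nat.mod_eq_of_lt (by have := b.isLt; omega)
    by_cases hab : a = b
    · subst hab
      rw [if_pos ⟨by rw [hb], by rw [hb]; exact a.isLt⟩, if_pos rfl]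
    · rw [if_neg, if_neg hab]
      rintro ⟨h1, _⟩
      rw [hb] at h1
      exact hab (Fin.ext (by omega))
  rw [h1, Matrix.det_one] at h0
  exact one_ne_zero h0


/-- Inclusions among the ideals `J_i^t` and `K_j` of `ℂ[t, z_{ij}]`: if `i ≤ j`
then `J_i^t ⊆ J_j^t` and `K_j ⊆ K_i`; and for `i < j`, `k < ℓ` (all in `[n-1]`),
`J_i^t + K_j ⊆ J_k^t + K_ℓ` if and only if `i ≤ k` and `j ≥ ℓ`. -/
theorem Jt_Kt_inclusions (n : ℕ) [NeZero n] (hn : 2 ≤ n) :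
    (∀ i j : ℕ, 1 ≤ i → i ≤ j → j ≤ n - 1 → Jt n i ≤ Jt n j ∧ Kt n j ≤ Kt n i) ∧
    (∀ i j k l : ℕ, 1 ≤ i → i < j → j ≤ n - 1 → 1 ≤ k → k < l → l ≤ n - 1 →
      (Jt n i + Kt n j ≤ Jt n k + Kt n l ↔ i ≤ k ∧ l ≤ j)) := by
  refine ⟨fun i j _ hij _ => ⟨Jt_mono n hij, Kt_antitone n hij⟩, ?_⟩
  intro i j k l hi hij hj hk hkl hl
  constructor
  · intro hsub
    constructor
    · by_contra hik
      push_neg at hik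
      have hkn : k < n := by omega
      refine notmem_case1 n hk hkl hl hkn (hsub ?_)
      rw [Ideal.add_eq_sup]
      exact Submodule.mem_sup_left (Ideal.subset_span ⟨⟨k, hkn⟩, hik, rfl⟩)
    · by_contra hlj
      push_neg at hlj
      refine notmem_case2 n hk hkl hl hlj hj (hsub ?_)
      rw [Ideal.add_eq_sup]
      refine Submodule.mem_sup_right (Ideal.subset_span ?_)
      exact ⟨fun a => ⟨(a : ℕ) + 1, by have := a.isLt; omega⟩,
        fun a b h => by simp only [Fin.mk_lt_mk]; exact Nat.succ_lt_succ h,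
        fun a => Nat.le_add_left 1 _, rfl⟩
  · rintro ⟨hik, hlj⟩
    rw [Ideal.add_eq_sup, Ideal.add_eq_sup]
    exact sup_le (le_trans (Jt_mono n hik) le_sup_left)
      (le_trans (Kt_antitone n hlj) le_sup_right)
end

section
/- Let n ≥ 2 and 1 ≤ m < i₀ ≤ n−1. Let B₀ ⊆ {2,...,n} with n ∈ B₀ and |B₀| = i₀. Then p_{B₀} ∉ ⟨z_{n1}, z_{n2}, ..., z_{nm}⟩ in C[z_{ij}]. -/
open MvPolynomial

/-- The variable `z_{ij}` in `ℂ[z_{ij} : 1 ≤ i, j ≤ n]` (`0`-based indexing). -/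
noncomputable def z0 (n : ℕ) (i j : Fin n) : MvPolynomial (Fin n × Fin n) ℂ := X (i, j)

/-- The ideal `J_i^0 = ⟨z_{n1}, …, z_{ni}⟩`. -/
noncomputable def J0 (n : ℕ) [NeZero n] (i : ℕ) : Ideal (MvPolynomial (Fin n × Fin n) ℂ) :=
  Ideal.span {f | ∃ k : Fin n, (k : ℕ) < i ∧ f = z0 n (rowN n) k}

/-- The ideal `K_j`, generated by the `j × j` minors `p_B` of `(z_{kℓ})` with row set
`B ⊆ {2, …, n}`, `|B| = j`, and columns `1, …, j` (for `j ≤ n` the column index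
`b % n` is just `b`; `K_n = 0` since no admissible `B` exists). -/
noncomputable def K0 (n : ℕ) [NeZero n] (j : ℕ) : Ideal (MvPolynomial (Fin n × Fin n) ℂ) :=
  Ideal.span {f | ∃ B : Fin j → Fin n, StrictMono B ∧ (∀ a, 1 ≤ (B a : ℕ)) ∧
    f = Matrix.det (Matrix.of fun a b : Fin j =>
      z0 n (B a) ⟨(b : ℕ) % n, Nat.mod_lt _ (Nat.pos_of_ne_zero (NeZero.ne n))⟩)}

/-- For `1 ≤ m < i₀ ≤ n − 1` and `B₀ ⊆ {2, …, n}` with `n ∈ B₀` and `|B₀| = i₀`,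
the minor `p_{B₀}` does not lie in the ideal `⟨z_{n1}, …, z_{nm}⟩`. -/
theorem pB0_not_mem (n : ℕ) [NeZero n] (hn : 2 ≤ n) (m i₀ : ℕ)
    (hm : 1 ≤ m) (hmi : m < i₀) (hi : i₀ ≤ n - 1)
    (B₀ : Fin i₀ → Fin n) (hB : StrictMono B₀) (hB1 : ∀ a, 1 ≤ (B₀ a : ℕ))
    (hBn : ∃ a, (B₀ a : ℕ) = n - 1) :
    (Matrix.det (Matrix.of fun a b : Fin i₀ =>
        z0 n (B₀ a) (Fin.castLE (by omega) b))) ∉ J0 n m := by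
  classical
  intro hmem
  set v : Fin n × Fin n → ℂ := fun p =>
    if ∃ a : Fin i₀, B₀ a = p.1 ∧ (a : ℕ) = (p.2 : ℕ) then 1 else 0 with hv
  have hker : J0 n m ≤ RingHom.ker (aeval v : MvPolynomial (Fin n × Fin n) ℂ →ₐ[ℂ] ℂ) := by
    rw [J0, Ideal.span_le]
    rintro f ⟨k, hk, rfl⟩
    simp only [SetLike.mem_coe, RingHom.mem_ker, z0, AlgHom.toRingHom_eq_coe,
      RingHom.coe_coe, aeval_X]
    rw [hv]
    simp only
    rw [if_neg]
    rintro ⟨a, ha1, ha2⟩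
    have haval : (B₀ a : ℕ) = n - 1 := by
      have := congrArg Fin.val ha1
      simpa [rowN] using this
    have halt : (a : ℕ) < i₀ - 1 := by omega
    have hlast : B₀ a < B₀ ⟨i₀ - 1, by omega⟩ := hB (by simpa [Fin.lt_def] using halt)
    have := (B₀ ⟨i₀ - 1, by omega⟩).isLt
    rw [Fin.lt_def] at hlast
    omega
  have h0 : (aeval v) (Matrix.det (Matrix.of fun a b : Fin i₀ =>
      z0 n (B₀ a) (Fin.castLE (by omega) b))) = 0 := hker hmem
  have h1 : ((Matrix.of fun a b : Fin i₀ =>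
      z0 n (B₀ a) (Fin.castLE (by omega) b)).map (aeval v)) = (1 : Matrix (Fin i₀) (Fin i₀) ℂ) := by
    ext a b
    simp only [Matrix.map_apply, Matrix.of_apply, z0, aeval_X, Matrix.one_apply, hv]
    congr 1
    simp only [eq_iff_iff]
    constructor
    · rintro ⟨a', ha1, ha2⟩
      have := hB.injective ha1
      subst this
      exact Fin.ext (by simpa using ha2)
    · rintro rfl
      exact ⟨a, rfl, by simp⟩
  rw [← AlgHom.coe_toRingHom, RingHom.map_det, RingHom.mapMatrix_apply, AlgHom.coe_toRingHom, h1, Matrix.det_one] at h0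
  exact one_ne_zero h0
end

section
/- For the lexicographic monomial order on C[s, t, z_{ij}] with s ≻ t ≻ z_{1n} ≻ z_{1,n−1} ≻ ... ≻ z_{11} ≻ z_{21} ≻ ... ≻ z_{nn}, the leading term of the minor p_B, for B = {b₁ < ... < b_j} ⊆ {2,...,n}, is the diagonal monomial z_{b₁1} z_{b₂2} ··· z_{b_j j}. -/
open MvPolynomial

/-- Variables of `ℂ[s, t, z_{ij}]`: `none` is `s`, `some none` is `t`, and
`some (some (i, j))` is `z_{i+1, j+1}` (`0`-based indexing of `i, j`). -/
abbrev Vst (n : ℕ) := Option (Option (Fin n × Fin n))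

/-- The precedence rank of each variable for the lexicographic order
`s ≻ t ≻ z_{1n} ≻ z_{1,n−1} ≻ ⋯ ≻ z_{11} ≻ z_{21} ≻ ⋯ ≻ z_{2n} ≻ ⋯ ≻ z_{nn}`
(smaller rank = higher precedence). -/
def rho (n : ℕ) : Vst n → ℕ
  | none => 0
  | some none => 1
  | some (some (i, j)) =>
      if (i : ℕ) = 0 then 2 + (n - 1 - (j : ℕ)) else 2 + n + ((i : ℕ) - 1) * n + (j : ℕ)

/-- `m` is lexicographically smaller than `m'`: at the highest-precedence
variable where they differ, `m` has the smaller exponent. -/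
def LexLT (n : ℕ) (m m' : Vst n →₀ ℕ) : Prop :=
  ∃ v : Vst n, (∀ w : Vst n, rho n w < rho n v → m w = m' w) ∧ m v < m' v

namespace PBaux

variable {n j : ℕ}

/-- The variable in row `B a`, column `b`. -/
def fv (hj : j ≤ n) (B : Fin j → Fin n) (a b : Fin j) : Vst n :=
  some (some (B a, Fin.castLE hj b))

lemma fv_inj {hj : j ≤ n} {B : Fin j → Fin n} (hB : Function.Injective B)
    {a b c d : Fin j} (h : fv hj B a b = fv hj B c d) : a = c ∧ b = d := by
  simp only [fv, Option.some.injEq, Prod.mk.injEq] at h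
  exact ⟨hB h.1, Fin.castLE_injective hj h.2⟩

/-- The exponent vector of the monomial associated with the permutation `σ`. -/
noncomputable def M (hj : j ≤ n) (B : Fin j → Fin n) (σ : Equiv.Perm (Fin j)) :
    Vst n →₀ ℕ :=
  ∑ i : Fin j, Finsupp.single (fv hj B (σ i) i) 1

lemma M_apply (hj : j ≤ n) (B : Fin j → Fin n) (σ : Equiv.Perm (Fin j)) (w : Vst n) :
    M hj B σ w = ∑ i : Fin j, if fv hj B (σ i) i = w then 1 else 0 := by
  rw [M, Finsupp.finset_sum_apply]
  exact Finset.sum_congr rfl fun i _ => Finsupp.single_apply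

lemma M_apply_fv {hj : j ≤ n} {B : Fin j → Fin n} (hB : Function.Injective B)
    (σ : Equiv.Perm (Fin j)) (a b : Fin j) :
    M hj B σ (fv hj B a b) = if σ b = a then 1 else 0 := by
  rw [M_apply, Finset.sum_eq_single b]
  · by_cases h : σ b = a
    · simp [h]
    · rw [if_neg h, if_neg]
      intro hc
      exact h (fv_inj hB hc).1
  · intro i _ hi
    rw [if_neg]
    intro hc
    exact hi (fv_inj hB hc).2
  · simp

lemma M_inj {hj : j ≤ n} {B : Fin j → Fin n} (hB : Function.Injective B)
    {σ τ : Equiv.Perm (Fin j)} (h : M hj B σ = M hj B τ) : σ = τ := by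
  apply Equiv.ext
  intro b
  have h1 : M hj B σ (fv hj B (σ b) b) = 1 := by rw [M_apply_fv hB, if_pos rfl]
  have h2 : M hj B τ (fv hj B (σ b) b) = if τ b = σ b then 1 else 0 := M_apply_fv hB τ _ _
  rw [h, h2] at h1
  by_contra hne
  rw [if_neg (by exact fun hc => hne hc.symm)] at h1
  exact one_ne_zero h1.symm

lemma rho_fv {hj : j ≤ n} {B : Fin j → Fin n} (hB1 : ∀ a, 1 ≤ (B a : ℕ)) (a b : Fin j) :
    rho n (fv hj B a b) = 2 + n + ((B a : ℕ) - 1) * n + (b : ℕ) := by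
  have : (B a : ℕ) ≠ 0 := by have := hB1 a; omega
  simp [rho, fv, this]

lemma rho_lt {hj : j ≤ n} {B : Fin j → Fin n} (hB : StrictMono B)
    (hB1 : ∀ a, 1 ≤ (B a : ℕ)) {a b c : Fin j} (hab : a ≤ b) (hac : a ≤ c)
    (hne : ¬(c = a ∧ b = a)) : rho n (fv hj B a a) < rho n (fv hj B c b) := by
  rw [rho_fv hB1, rho_fv hB1]
  rcases eq_or_lt_of_le hac with h | h
  · have hba : (a : ℕ) < (b : ℕ) := by
      rcases eq_or_lt_of_le hab with h' | h'
      · exact absurd ⟨h.symm, h'.symm⟩ hne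
      · exact h'
    rw [← h]
    omega
  · have hBa := hB1 a
    have hBlt : (B a : ℕ) < (B c : ℕ) := hB h
    have hmul : ((B a : ℕ) - 1 + 1) * n ≤ ((B c : ℕ) - 1) * n :=
      Nat.mul_le_mul_right n (by omega)
    rw [Nat.add_mul, one_mul] at hmul
    have han : (a : ℕ) < n := lt_of_lt_of_le a.isLt hj
    omega

end PBaux

/-- For the lexicographic monomial order on `ℂ[s, t, z_{ij}]` with
`s ≻ t ≻ z_{1n} ≻ ⋯ ≻ z_{11} ≻ z_{21} ≻ ⋯ ≻ z_{nn}`, the leading term of the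
minor `p_B` (rows `B = {b₁ < … < b_j} ⊆ {2, …, n}`, columns `1, …, j`) is the
diagonal monomial `z_{b₁1} z_{b₂2} ⋯ z_{b_j j}`: its coefficient in `p_B` is `1`
and every other monomial of `p_B` is lexicographically smaller. -/
theorem pB_leadingTerm_diagonal (n j : ℕ) (hn : 2 ≤ n) (hj1 : 1 ≤ j) (hj : j ≤ n)
    (B : Fin j → Fin n) (hB : StrictMono B) (hB1 : ∀ a, 1 ≤ (B a : ℕ)) :
    let pB : MvPolynomial (Vst n) ℂ :=
      Matrix.det (Matrix.of fun a b : Fin j => X (some (some (B a, Fin.castLE hj b))))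
    let D : Vst n →₀ ℕ :=
      ∑ a : Fin j, Finsupp.single (some (some (B a, Fin.castLE hj a))) 1
    MvPolynomial.coeff D pB = 1 ∧ ∀ m ∈ pB.support, m ≠ D → LexLT n m D := by
  intro pB D
  have hBi : Function.Injective B := hB.injective
  have hD : D = PBaux.M hj B 1 := by
    simp [PBaux.M, PBaux.fv]
    rfl
  -- express pB as a sum of monomials indexed by permutations
  have hprod : ∀ σ : Equiv.Perm (Fin j),
      (∏ i, (X (PBaux.fv hj B (σ i) i) : MvPolynomial (Vst n) ℂ)) =
        monomial (PBaux.M hj B σ) 1 := by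
    intro σ
    rw [PBaux.M, monomial_sum_one]
    rfl
  have hpB : pB = ∑ σ : Equiv.Perm (Fin j),
      monomial (PBaux.M hj B σ) (((Equiv.Perm.sign σ : ℤ) : ℂ)) := by
    show Matrix.det _ = _
    rw [Matrix.det_apply']
    refine Finset.sum_congr rfl fun σ _ => ?_
    have : (∏ i, (Matrix.of fun a b : Fin j =>
        (X (some (some (B a, Fin.castLE hj b))) : MvPolynomial (Vst n) ℂ)) (σ i) i) =
        monomial (PBaux.M hj B σ) 1 := hprod σ
    rw [this, ← map_intCast (C : ℂ →+* MvPolynomial (Vst n) ℂ) ((Equiv.Perm.sign σ : ℤ)),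
      C_mul_monomial, mul_one]
  have hcoeff : ∀ m : Vst n →₀ ℕ, coeff m pB =
      ∑ σ : Equiv.Perm (Fin j),
        if PBaux.M hj B σ = m then ((Equiv.Perm.sign σ : ℤ) : ℂ) else 0 := by
    intro m
    rw [hpB, coeff_sum]
    refine Finset.sum_congr rfl fun σ _ => ?_
    rw [coeff_monomial]
  constructor
  · -- the coefficient of D is 1
    rw [hcoeff, Finset.sum_eq_single (1 : Equiv.Perm (Fin j))]
    · rw [hD, if_pos rfl]
      simp
    · intro σ _ hσ
      rw [hD, if_neg]
      intro hc
      exact hσ (PBaux.M_inj hBi hc)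
    · simp
  · -- every other monomial is lex-smaller
    intro m hm hmD
    have hm0 : coeff m pB ≠ 0 := by
      rwa [MvPolynomial.mem_support_iff] at hm
    -- there is a permutation σ with M σ = m
    have hex : ∃ σ : Equiv.Perm (Fin j), PBaux.M hj B σ = m := by
      by_contra hno
      push_neg at hno
      apply hm0
      rw [hcoeff]
      exact Finset.sum_eq_zero fun σ _ => if_neg (hno σ)
    obtain ⟨σ, hσ⟩ := hex
    have hσ1 : σ ≠ 1 := by
      intro h
      exact hmD (by rw [← hσ, h, hD])
    -- the smallest non-fixed point of σ
    have hSne : (Finset.univ.filter fun i : Fin j => σ i ≠ i).Nonempty := by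
      by_contra h
      rw [Finset.not_nonempty_iff_eq_empty, Finset.filter_eq_empty_iff] at h
      exact hσ1 (Equiv.ext fun i => by simpa using h (Finset.mem_univ i))
    set a := (Finset.univ.filter fun i : Fin j => σ i ≠ i).min' hSne with ha
    have haS : σ a ≠ a := by
      have := (Finset.univ.filter fun i : Fin j => σ i ≠ i).min'_mem hSne
      rw [← ha, Finset.mem_filter] at this
      exact this.2
    have hmin : ∀ i : Fin j, i < a → σ i = i := by
      intro i hi
      by_contra hne
      have : a ≤ i := Finset.min'_le _ i (by simp [hne])
      exact absurd hi (not_lt.mpr this)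
    -- for i ≥ a, σ i ≥ a
    have hge : ∀ i : Fin j, a ≤ i → a ≤ σ i := by
      intro i hi
      by_contra h
      push_neg at h
      have := hmin (σ i) h
      have : σ i = i := σ.injective this
      rw [this] at h
      exact absurd hi (not_le.mpr h)
    refine ⟨PBaux.fv hj B a a, ?_, ?_⟩
    · -- exponents agree on all higher-precedence variables
      intro w hw
      rw [← hσ, hD, PBaux.M_apply, PBaux.M_apply]
      refine Finset.sum_congr rfl fun i _ => ?_
      rcases lt_or_ge i a with hia | hia
      · rw [hmin i hia, Equiv.Perm.one_apply]
      · have h1 : PBaux.fv hj B (σ i) i ≠ w := by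
          intro hc
          have hlt : rho n (PBaux.fv hj B a a) ≤ rho n (PBaux.fv hj B (σ i) i) := by
            by_cases hcase : σ i = a ∧ i = a
            · rw [hcase.1, hcase.2]
            · exact le_of_lt (PBaux.rho_lt hB hB1 hia (hge i hia) hcase)
          rw [hc] at hlt
          exact absurd hw (not_lt.mpr hlt)
        have h2 : PBaux.fv hj B ((1 : Equiv.Perm (Fin j)) i) i ≠ w := by
          rw [Equiv.Perm.one_apply]
          intro hc
          have hlt : rho n (PBaux.fv hj B a a) ≤ rho n (PBaux.fv hj B i i) := by
            rcases eq_or_lt_of_le hia with h | h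
            · rw [← h]
            · exact le_of_lt (PBaux.rho_lt hB hB1 hia hia
                (fun hc' => absurd hc'.1 (ne_of_gt h)))
          rw [hc] at hlt
          exact absurd hw (not_lt.mpr hlt)
        rw [if_neg h1, if_neg h2]
    · -- at the variable `z_{B a, a}` the exponents differ: 0 < 1
      rw [← hσ, hD, PBaux.M_apply_fv hBi, PBaux.M_apply_fv hBi, if_neg haS,
        if_pos (Equiv.Perm.one_apply _)]
      exact Nat.zero_lt_one
end
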